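/- Suppose Λ = Uᵀ Λ' U where U is a nonnegative |T|×|T| real matrix and Λ, Λ' are nonnegative upper-triangular matrices with strictly positive diagonal entries. Then U = Π⁻¹ D, where D is a diagonal matrix with strictly positive diagonal entries and Π is a permutation matrix such that Πᵀ Λ Π is upper-triangular. -/
import Mathlib


open Matrix

/-- The permutation matrix of `π`: entry `(i, π i)` equals 1, others 0. -/
def permMatrix {T : Type*} [DecidableEq T] (π : Equiv.Perm T) : Matrix T T ℝ :=
  fun i j => if π i = j then 1 else 0

theorem stmt1 {T : Type*} [Fintype T] [DecidableEq T] [LinearOrder T]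
    (U Λ Λ' : Matrix T T ℝ)
    (hU : ∀ i j, 0 ≤ U i j)
    (hΛnn : ∀ i j, 0 ≤ Λ i j) (hΛut : ∀ i j, j < i → Λ i j = 0)
    (hΛd : ∀ i, 0 < Λ i i)
    (hΛ'nn : ∀ i j, 0 ≤ Λ' i j) (hΛ'ut : ∀ i j, j < i → Λ' i j = 0)
    (hΛ'd : ∀ i, 0 < Λ' i i)
    (heq : Λ = Uᵀ * Λ' * U) :
    ∃ (π : Equiv.Perm T) (d : T → ℝ),
      (∀ t, 0 < d t) ∧
      (∀ i j, j < i → ((permMatrix π)ᵀ * Λ * permMatrix π) i j = 0) ∧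
      U = (permMatrix π)⁻¹ * Matrix.diagonal d := by
  classical
  have hsum : ∀ a b, Λ a b = ∑ k, ∑ l, U k a * Λ' k l * U l b := by
    intro a b
    rw [heq]
    simp only [Matrix.mul_apply, Matrix.transpose_apply, Finset.sum_mul]
    rw [Finset.sum_comm]
  -- every term of the expansion of a strictly-lower entry vanishes
  have hterm : ∀ a b, b < a → ∀ k l, U k a * Λ' k l * U l b = 0 := by
    intro a b hba k l
    have h0 : ∑ k, ∑ l, U k a * Λ' k l * U l b = 0 := by
      rw [← hsum]; exact hΛut a b hba
    have hnn : ∀ k l, (0:ℝ) ≤ U k a * Λ' k l * U l b := fun k l =>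
      mul_nonneg (mul_nonneg (hU k a) (hΛ'nn k l)) (hU l b)
    have h1 := (Finset.sum_eq_zero_iff_of_nonneg
      (fun k _ => Finset.sum_nonneg fun l _ => hnn k l)).mp h0 k (Finset.mem_univ k)
    exact (Finset.sum_eq_zero_iff_of_nonneg
      (fun l _ => hnn k l)).mp h1 l (Finset.mem_univ l)
  -- distinct columns of U have disjoint supports
  have hrow : ∀ k i j, i ≠ j → U k i * U k j = 0 := by
    intro k i j hij
    rcases hij.lt_or_gt with hlt | hlt
    · have h2 : Λ' k k * (U k i * U k j) = 0 := by
        linear_combination hterm j i hlt k k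
      exact (mul_eq_zero.mp h2).resolve_left (hΛ'd k).ne'
    · have h2 : Λ' k k * (U k i * U k j) = 0 := by
        linear_combination hterm i j hlt k k
      exact (mul_eq_zero.mp h2).resolve_left (hΛ'd k).ne'
  -- each column has a nonzero entry
  have hcol : ∀ i, ∃ k, U k i ≠ 0 := by
    intro i
    by_contra hc
    push_neg at hc
    have h0 : Λ i i = 0 := by
      rw [hsum]
      refine Finset.sum_eq_zero fun k _ => Finset.sum_eq_zero fun l _ => ?_
      rw [hc k]; ring
    exact (hΛd i).ne' h0
  set h : T → T := fun i => (hcol i).choose with hh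
  have hspec : ∀ i, U (h i) i ≠ 0 := fun i => (hcol i).choose_spec
  have hinj : Function.Injective h := by
    intro i j hij
    by_contra hne
    exact mul_ne_zero (hspec i) (by rw [hij]; exact hspec j) (hrow (h i) i j hne)
  set e : Equiv.Perm T := Equiv.ofBijective h (Finite.injective_iff_bijective.mp hinj)
    with he
  have heapp : ∀ i, e i = h i := fun i => rfl
  set d : T → ℝ := fun i => U (h i) i with hd
  have hdpos : ∀ i, 0 < d i := fun i => lt_of_le_of_ne (hU _ _) (Ne.symm (hspec i))
  have Uform : ∀ k j, U k j = if h j = k then d j else 0 := by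
    intro k j
    split_ifs with hk
    · rw [← hk]
    · by_contra hne
      obtain ⟨i, hi⟩ := (Finite.injective_iff_bijective.mp hinj).2 k
      have hij : i ≠ j := fun hc => hk (hc ▸ hi)
      have hU1 : U k i ≠ 0 := by rw [← hi]; exact hspec i
      exact mul_ne_zero hU1 hne (hrow k i j hij)
  have hΛform : ∀ a b, Λ a b = d a * Λ' (h a) (h b) * d b := by
    intro a b
    rw [hsum]
    calc ∑ k, ∑ l, U k a * Λ' k l * U l b
        = ∑ k, ∑ l, (if h a = k then d a else 0) * Λ' k l *
            (if h b = l then d b else 0) := by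
          exact Finset.sum_congr rfl fun k _ => Finset.sum_congr rfl fun l _ => by
            rw [← Uform, ← Uform]
      _ = d a * Λ' (h a) (h b) * d b := by
          simp [ite_mul, mul_ite, Finset.sum_ite_eq]
  have hPR : permMatrix e * (permMatrix e)ᵀ = 1 := by
    ext i j
    simp only [Matrix.mul_apply, permMatrix, Matrix.transpose_apply, Matrix.one_apply,
      ite_mul, one_mul, zero_mul]
    rw [Finset.sum_ite_eq Finset.univ (e i) (fun k => if e j = k then (1:ℝ) else 0)]
    simp [Equiv.apply_eq_iff_eq, eq_comm]
  have hinv : (permMatrix e)⁻¹ = (permMatrix e)ᵀ := Matrix.inv_eq_right_inv hPR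
  refine ⟨e, d, hdpos, ?_, ?_⟩
  · intro i j hji
    have hentry : ((permMatrix e)ᵀ * Λ * permMatrix e) i j = Λ (e.symm i) (e.symm j) := by
      simp only [Matrix.mul_apply, permMatrix, Matrix.transpose_apply, ite_mul, mul_ite,
        one_mul, mul_one, zero_mul, mul_zero]
      have hcond : ∀ (x k : T), (e k = x) = (k = e.symm x) := by
        intro x k
        simp [Equiv.eq_symm_apply, eq_comm]
      simp only [hcond]
      simp [Finset.sum_ite_eq']
    rw [hentry, hΛform]
    have h1 : h (e.symm i) = i := e.apply_symm_apply i
    have h2 : h (e.symm j) = j := e.apply_symm_apply j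
    rw [h1, h2, hΛ'ut i j hji]
    ring
  · rw [hinv]
    ext k j
    rw [Matrix.mul_apply]
    simp only [Matrix.transpose_apply, permMatrix, Matrix.diagonal_apply, ite_mul, one_mul,
      zero_mul, mul_ite, mul_zero, mul_one]
    rw [Uform k j]
    rw [Finset.sum_ite_eq' Finset.univ j (fun x => if e x = k then d x else 0)]
    simp [heapp]
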